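/- Let ψ ∈ ℝ, and D_ε[ψ](r,t) = −(2ψ/(r√π)) ∫₀ᵗ e^{-s} ∫₀^{(r−1)√ε/(2√(t−s))} e^{-z²} dz ds for r > 1, t > 0, ε > 0. Then there exists C > 0 (independent of ψ, r, t, ε) such that |∂_r D_ε[ψ](r,t)| ≤ C√(εt) |ψ|. -/

import Mathlib

open Real MeasureTheory

/-- The Duhamel term for constant boundary data in the exterior-ball problem. -/
noncomputable def De (ψ ε r t : ℝ) : ℝ :=
  -(2 * ψ / (r * Real.sqrt π)) *
    ∫ s in (0:ℝ)..t, Real.exp (-s) *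
      ∫ z in (0:ℝ)..((r - 1) * Real.sqrt ε / (2 * Real.sqrt (t - s))), Real.exp (-z ^ 2)

lemma key_int (t : ℝ) (ht : 0 < t) : ∫ s in (0:ℝ)..t, (Real.sqrt (t - s))⁻¹ = 2 * Real.sqrt t := by
  have h1 : (∫ s in (0:ℝ)..t, (Real.sqrt (t - s))⁻¹) = ∫ u in (0:ℝ)..t, (Real.sqrt u)⁻¹ := by
    have := intervalIntegral.integral_comp_sub_left (a := 0) (b := t) (fun u => (Real.sqrt u)⁻¹) t
    simpa using this
  rw [h1]
  have h2 : Set.EqOn (fun u => (Real.sqrt u)⁻¹) (fun u : ℝ => u ^ (-(1/2) : ℝ)) (Set.uIcc 0 t) := by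
    intro u hu
    rw [Set.uIcc_of_le ht.le] at hu
    simp only
    rw [Real.sqrt_eq_rpow, ← Real.rpow_neg hu.1]
  rw [intervalIntegral.integral_congr h2, integral_rpow (Or.inl (by norm_num))]
  rw [Real.sqrt_eq_rpow]
  norm_num
  ring

lemma key_integrable (t : ℝ) (ht : 0 < t) :
    IntervalIntegrable (fun s => (Real.sqrt (t - s))⁻¹) volume 0 t := by
  have h0 : IntervalIntegrable (fun u : ℝ => u ^ (-(1/2) : ℝ)) volume 0 t :=
    intervalIntegral.intervalIntegrable_rpow' (by norm_num)
  have h1 : IntervalIntegrable (fun s : ℝ => (t - s) ^ (-(1/2) : ℝ)) volume 0 t := by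
    have := (h0.comp_sub_left t).symm
    simpa using this
  rw [intervalIntegrable_iff_integrableOn_Ioc_of_le ht.le] at h1 ⊢
  refine h1.congr_fun ?_ measurableSet_Ioc
  intro s hs
  simp only
  rw [Real.sqrt_eq_rpow, ← Real.rpow_neg (by simp at hs; linarith [hs.2] : (0:ℝ) ≤ t - s)]

noncomputable def erf1 (a : ℝ) : ℝ := ∫ z in (0:ℝ)..a, Real.exp (-z ^ 2)

lemma cont_gauss : Continuous fun z : ℝ => Real.exp (-z ^ 2) := by continuity

lemma erf1_hasDerivAt (a : ℝ) : HasDerivAt erf1 (Real.exp (-a ^ 2)) a :=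
  intervalIntegral.integral_hasDerivAt_right (cont_gauss.intervalIntegrable _ _)
    cont_gauss.stronglyMeasurable.stronglyMeasurableAtFilter cont_gauss.continuousAt

lemma erf1_continuous : Continuous erf1 :=
  continuous_iff_continuousAt.2 fun a => (erf1_hasDerivAt a).continuousAt

lemma abs_erf1_le (a : ℝ) : |erf1 a| ≤ |a| := by
  have := intervalIntegral.norm_integral_le_of_norm_le_const (C := 1)
    (f := fun z : ℝ => Real.exp (-z ^ 2)) (a := 0) (b := a) ?_
  · simpa [erf1] using this
  · intro x _
    rw [Real.norm_eq_abs, abs_of_pos (Real.exp_pos _)]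
    exact Real.exp_le_one_iff.2 (by nlinarith [sq_nonneg x])

noncomputable def Ff (ε t x s : ℝ) : ℝ :=
  Real.exp (-s) * erf1 ((x - 1) * Real.sqrt ε / (2 * Real.sqrt (t - s)))

noncomputable def Ff' (ε t x s : ℝ) : ℝ :=
  Real.exp (-s) * (Real.exp (-((x - 1) * Real.sqrt ε / (2 * Real.sqrt (t - s))) ^ 2) *
    (Real.sqrt ε / (2 * Real.sqrt (t - s))))

lemma Ff_hasDerivAt (ε t x s : ℝ) : HasDerivAt (fun y => Ff ε t y s) (Ff' ε t x s) x := by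
  have hu : HasDerivAt (fun y : ℝ => (y - 1) * Real.sqrt ε / (2 * Real.sqrt (t - s)))
      (Real.sqrt ε / (2 * Real.sqrt (t - s))) x :=
    by simpa using (((hasDerivAt_id x).sub_const 1).mul_const (Real.sqrt ε)).div_const (2 * Real.sqrt (t - s))
  have h2 := (erf1_hasDerivAt ((x - 1) * Real.sqrt ε / (2 * Real.sqrt (t - s)))).comp x hu
  exact h2.const_mul (Real.exp (-s))


set_option maxHeartbeats 1000000 in
theorem stmt_10 :
    ∃ C : ℝ, 0 < C ∧ ∀ ψ r t ε : ℝ, 1 < r → 0 < t → 0 < ε →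
      |deriv (fun r' => De ψ ε r' t) r| ≤ C * Real.sqrt (ε * t) * |ψ| := by
  refine ⟨4, by norm_num, ?_⟩
  intro ψ r t ε hr ht hε
  set X := Real.sqrt ε * Real.sqrt t with hX
  have hX0 : 0 ≤ X := mul_nonneg (Real.sqrt_nonneg _) (Real.sqrt_nonneg _)
  have hfun : (fun s => Real.sqrt ε / (2 * Real.sqrt (t - s)))
      = fun s => (Real.sqrt ε / 2) * (Real.sqrt (t - s))⁻¹ := by
    funext s; rw [← div_div, div_eq_mul_inv]
  have huIoc : Set.uIoc (0:ℝ) t = Set.Ioc 0 t := Set.uIoc_of_le ht.le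
  -- integrability and value of the dominating function
  have hk_int : IntervalIntegrable (fun s => Real.sqrt ε / (2 * Real.sqrt (t - s)))
      volume 0 t := by
    rw [hfun]
    exact (key_integrable t ht).const_mul _
  have hk_val : ∫ s in (0:ℝ)..t, Real.sqrt ε / (2 * Real.sqrt (t - s)) = X := by
    rw [hfun, intervalIntegral.integral_const_mul, key_int t ht]
    ring
  -- measurability
  have hmeas : ∀ x : ℝ, AEStronglyMeasurable (Ff ε t x)
      (volume.restrict (Set.uIoc (0:ℝ) t)) := by
    intro x
    have hu : Measurable fun s : ℝ => (x - 1) * Real.sqrt ε / (2 * Real.sqrt (t - s)) :=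
      measurable_const.div (by fun_prop)
    exact ((Real.measurable_exp.comp measurable_neg).mul
      (erf1_continuous.measurable.comp hu)).aestronglyMeasurable
  have hmeas' : AEStronglyMeasurable (Ff' ε t r) (volume.restrict (Set.uIoc (0:ℝ) t)) := by
    have hu : Measurable fun s : ℝ => (r - 1) * Real.sqrt ε / (2 * Real.sqrt (t - s)) :=
      measurable_const.div (by fun_prop)
    have hk : Measurable fun s : ℝ => Real.sqrt ε / (2 * Real.sqrt (t - s)) :=
      measurable_const.div (by fun_prop)
    exact ((Real.measurable_exp.comp measurable_neg).mul
      ((Real.measurable_exp.comp (hu.pow_const 2).neg).mul hk)).aestronglyMeasurable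
  -- pointwise bound on the derivative
  have hbpt : ∀ s ∈ Set.Ioc (0:ℝ) t, ∀ x : ℝ,
      ‖Ff' ε t x s‖ ≤ Real.sqrt ε / (2 * Real.sqrt (t - s)) := by
    intro s hs x
    have hs0 : 0 < s := hs.1
    have hk0 : 0 ≤ Real.sqrt ε / (2 * Real.sqrt (t - s)) := by positivity
    rw [Ff', Real.norm_eq_abs, abs_of_nonneg (by positivity)]
    have he1 : Real.exp (-s) ≤ 1 := Real.exp_le_one_iff.2 (by linarith)
    have he2 : Real.exp (-((x - 1) * Real.sqrt ε / (2 * Real.sqrt (t - s))) ^ 2) ≤ 1 :=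
      Real.exp_le_one_iff.2
        (by nlinarith [sq_nonneg ((x - 1) * Real.sqrt ε / (2 * Real.sqrt (t - s)))])
    calc Real.exp (-s) * (Real.exp (-((x - 1) * Real.sqrt ε / (2 * Real.sqrt (t - s))) ^ 2) *
            (Real.sqrt ε / (2 * Real.sqrt (t - s))))
        ≤ 1 * (1 * (Real.sqrt ε / (2 * Real.sqrt (t - s)))) :=
          mul_le_mul he1 (mul_le_mul he2 le_rfl hk0 zero_le_one) (by positivity) zero_le_one
      _ = Real.sqrt ε / (2 * Real.sqrt (t - s)) := by ring
  -- pointwise bound on Ff itself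
  have hFpt : ∀ s ∈ Set.Ioc (0:ℝ) t,
      ‖Ff ε t r s‖ ≤ (r - 1) * (Real.sqrt ε / (2 * Real.sqrt (t - s))) := by
    intro s hs
    have hs0 : 0 < s := hs.1
    have he1 : Real.exp (-s) ≤ 1 := Real.exp_le_one_iff.2 (by linarith)
    have hu0 : 0 ≤ (r - 1) * Real.sqrt ε / (2 * Real.sqrt (t - s)) := by
      have h1 : (0:ℝ) ≤ r - 1 := by linarith
      positivity
    rw [Ff, Real.norm_eq_abs, abs_mul, abs_of_pos (Real.exp_pos _)]
    calc Real.exp (-s) * |erf1 ((r - 1) * Real.sqrt ε / (2 * Real.sqrt (t - s)))|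
        ≤ 1 * |(r - 1) * Real.sqrt ε / (2 * Real.sqrt (t - s))| :=
          mul_le_mul he1 (abs_erf1_le _) (abs_nonneg _) zero_le_one
      _ = (r - 1) * (Real.sqrt ε / (2 * Real.sqrt (t - s))) := by
          rw [one_mul, abs_of_nonneg hu0, mul_div_assoc]
  have hF_int : IntervalIntegrable (Ff ε t r) volume 0 t := by
    rw [intervalIntegrable_iff, huIoc]
    rw [intervalIntegrable_iff, huIoc] at hk_int
    refine (hk_int.const_mul (r - 1)).mono' ?_ ?_
    · have := hmeas r; rwa [huIoc] at this
    · filter_upwards [ae_restrict_mem measurableSet_Ioc] with s hs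
      exact hFpt s hs
  -- differentiation under the integral sign
  have hside1 : ∀ᵐ s ∂(volume : Measure ℝ), s ∈ Set.uIoc (0:ℝ) t → ∀ x ∈ Metric.ball r 1,
      ‖Ff' ε t x s‖ ≤ Real.sqrt ε / (2 * Real.sqrt (t - s)) := by
    refine Filter.Eventually.of_forall fun s hs x _ => ?_
    rw [huIoc] at hs
    exact hbpt s hs x
  have hside2 : ∀ᵐ s ∂(volume : Measure ℝ), s ∈ Set.uIoc (0:ℝ) t → ∀ x ∈ Metric.ball r 1,
      HasDerivAt (fun y => Ff ε t y s) (Ff' ε t x s) x :=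
    Filter.Eventually.of_forall fun s _ x _ => Ff_hasDerivAt ε t x s
  obtain ⟨hF'_int, hJ⟩ := intervalIntegral.hasDerivAt_integral_of_dominated_loc_of_deriv_le
    (F := Ff ε t) (F' := Ff' ε t) (x₀ := r) (a := 0) (b := t) (μ := volume)
    (bound := fun s => Real.sqrt ε / (2 * Real.sqrt (t - s))) (Metric.ball_mem_nhds r one_pos)
    (Filter.Eventually.of_forall hmeas) hF_int hmeas' hside1 hk_int hside2
  -- derivative of the prefactor
  have hπ : 0 < Real.sqrt π := Real.sqrt_pos.2 Real.pi_pos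
  have hr0 : 0 < r := by linarith
  have hrne : r * Real.sqrt π ≠ 0 := by positivity
  have hA : HasDerivAt (fun x : ℝ => -(2 * ψ / (x * Real.sqrt π)))
      (2 * ψ * Real.sqrt π / (r * Real.sqrt π) ^ 2) r := by
    have h : HasDerivAt (fun x : ℝ => -(2 * ψ / (x * Real.sqrt π))) _ r := (((hasDerivAt_const r (2 * ψ)).div ((hasDerivAt_id r).mul_const (Real.sqrt π))
      hrne).neg)
    convert h using 1
    simp only [id_eq]
    ring
  have hprod := hA.mul hJ
  have hDe : (fun x => De ψ ε x t)
      = fun x => -(2 * ψ / (x * Real.sqrt π)) * ∫ s in (0:ℝ)..t, Ff ε t x s := by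
    funext x
    simp only [De, Ff, erf1]
  rw [hDe, HasDerivAt.deriv (f := fun x => -(2 * ψ / (x * Real.sqrt π)) * ∫ s in (0:ℝ)..t, Ff ε t x s) hprod]
  -- bounds on the two integrals
  have hJbound : |∫ s in (0:ℝ)..t, Ff ε t r s| ≤ (r - 1) * X := by
    have h := intervalIntegral.norm_integral_le_of_norm_le (μ := volume) (a := 0) (b := t)
      (f := Ff ε t r) (g := fun s => (r - 1) * (Real.sqrt ε / (2 * Real.sqrt (t - s)))) ht.le ?_
      ((hk_int.const_mul (r - 1)))
    · rw [intervalIntegral.integral_const_mul, hk_val] at h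
      calc |∫ s in (0:ℝ)..t, Ff ε t r s| ≤ |(r - 1) * X| := (by rw [← Real.norm_eq_abs]; exact h.trans (le_abs_self _))
        _ = (r - 1) * X := abs_of_nonneg (by nlinarith)
    · rw [← ae_restrict_iff' measurableSet_Ioc]
      filter_upwards [ae_restrict_mem measurableSet_Ioc] with s hs
      exact hFpt s hs
  have hJ'bound : |∫ s in (0:ℝ)..t, Ff' ε t r s| ≤ X := by
    have h := intervalIntegral.norm_integral_le_of_norm_le (μ := volume) (a := 0) (b := t)
      (f := Ff' ε t r) (g := fun s => Real.sqrt ε / (2 * Real.sqrt (t - s))) ht.le ?_ hk_int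
    · rw [hk_val] at h
      calc |∫ s in (0:ℝ)..t, Ff' ε t r s| ≤ |X| := (by rw [← Real.norm_eq_abs]; exact h.trans (le_abs_self _))
        _ = X := abs_of_nonneg hX0
    · rw [← ae_restrict_iff' measurableSet_Ioc]
      filter_upwards [ae_restrict_mem measurableSet_Ioc] with s hs
      exact hbpt s hs r
  -- final arithmetic
  have hsqpi : Real.sqrt π * Real.sqrt π = π := Real.mul_self_sqrt Real.pi_pos.le
  have hπ1 : 1 ≤ Real.sqrt π := by nlinarith [Real.pi_gt_three]
  have hXX : Real.sqrt (ε * t) = X := Real.sqrt_mul hε.le t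
  rw [hXX]
  have habs1 : |2 * ψ * Real.sqrt π / (r * Real.sqrt π) ^ 2| ≤ 2 * |ψ| / r ^ 2 := by
    rw [abs_div, abs_of_nonneg (sq_nonneg (r * Real.sqrt π))]
    rw [div_le_div_iff₀ (by positivity) (by positivity)]
    have h2 : |2 * ψ * Real.sqrt π| = 2 * |ψ| * Real.sqrt π := by
      rw [abs_mul, abs_mul]
      simp [abs_of_nonneg hπ.le]
    rw [h2]
    have h5 : Real.sqrt π ≤ π := by nlinarith
    nlinarith [mul_nonneg (abs_nonneg ψ) (sq_nonneg r), h5]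
  have habs2 : |(-(2 * ψ / (r * Real.sqrt π)))| ≤ 2 * |ψ| := by
    rw [abs_neg, abs_div]
    rw [div_le_iff₀ (by positivity)]
    have h2 : |2 * ψ| = 2 * |ψ| := by rw [abs_mul]; simp
    rw [h2, abs_of_pos (by positivity : (0:ℝ) < r * Real.sqrt π)]
    have h3 : 1 ≤ r * Real.sqrt π := by nlinarith
    nlinarith [mul_le_mul_of_nonneg_left h3 (abs_nonneg ψ)]
  calc |(2 * ψ * Real.sqrt π / (r * Real.sqrt π) ^ 2 * ∫ s in (0:ℝ)..t, Ff ε t r s)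
        + -(2 * ψ / (r * Real.sqrt π)) * ∫ s in (0:ℝ)..t, Ff' ε t r s|
      ≤ |2 * ψ * Real.sqrt π / (r * Real.sqrt π) ^ 2| * |∫ s in (0:ℝ)..t, Ff ε t r s|
        + |(-(2 * ψ / (r * Real.sqrt π)))| * |∫ s in (0:ℝ)..t, Ff' ε t r s| := by
        refine (abs_add_le _ _).trans ?_
        rw [abs_mul, abs_mul]
    _ ≤ (2 * |ψ| / r ^ 2) * ((r - 1) * X) + (2 * |ψ|) * X := by
        gcongr <;> first
          | exact abs_nonneg _
          | exact habs1
          | exact habs2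
          | exact hJbound
          | exact hJ'bound
    _ ≤ 2 * |ψ| * X + 2 * |ψ| * X := by
        have h1 : (2 * |ψ| / r ^ 2) * ((r - 1) * X) ≤ 2 * |ψ| * X := by
          rw [div_mul_eq_mul_div, div_le_iff₀ (by positivity)]
          have h6 := mul_le_mul_of_nonneg_left (show r - 1 ≤ r ^ 2 by nlinarith)
            (by positivity : (0:ℝ) ≤ 2 * |ψ| * X)
          nlinarith [h6]
        linarith
    _ = 4 * X * |ψ| := by ring
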